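/- Let l be a list over a linear order and C a finite set of its positions such that l is faithfully ordered with respect to C. Then the number of adjacent inversions of l, i.e., the number of indices i with l[i] ≥ l[i+1], is at most 2·|C|: each corrupted position can create at most two adjacent inversions. -/

import Mathlib

/-- A list `l` in unreliable memory is faithfully ordered with respect to the set `C`
of corrupted positions if the entries at faithful (non-corrupted) positions appear in
strictly increasing order. -/
def FaithfullyOrdered {α : Type*} [LinearOrder α] (l : List α) (C : Set ℕ) : Prop :=
  ∀ (i j : ℕ) (hi : i < l.length) (hj : j < l.length),
    i < j → i ∉ C → j ∉ C → l[i] < l[j]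

private lemma length_filter_finRange_eq {n : ℕ} (q : Fin n → Bool) :
    ((List.finRange n).filter q).length = (Finset.univ.filter (fun i => q i = true)).card := by
  rw [Fin.univ_def]
  simp [Finset.filter, Finset.card, Multiset.filter_coe]

/-- a faithfully ordered list has at most `2·|C|` adjacent inversions,
i.e., indices `i` with `l[i] ≥ l[i+1]` (counted via the pairs of `l.zip l.tail`). -/
theorem adjacent_inversions_le_two_mul_faults {α : Type*} [LinearOrder α]
    (l : List α) (C : Finset ℕ) (h : FaithfullyOrdered l ↑C) :
    ((l.zip l.tail).filter (fun p => p.2 ≤ p.1)).length ≤ 2 * C.card := by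
  classical
  set n := l.length with hn
  have hzip : l.zip l.tail = List.ofFn (fun i : Fin (n - 1) =>
      (l[(i : ℕ)]'(by have := i.isLt; omega),
       l[(i : ℕ) + 1]'(by have := i.isLt; omega))) := by
    apply List.ext_getElem
    · simp [List.length_zip, hn]
    · intro i h1 h2
      simp [List.getElem_zip, List.getElem_tail]
  rw [hzip, List.ofFn_eq_map, List.filter_map, List.length_map]
  rw [length_filter_finRange_eq]
  simp only [Function.comp]
  set S : Finset (Fin (n - 1)) := Finset.univ.filter
    (fun i => (decide (l[(i : ℕ) + 1]'(by have := i.isLt; omega) ≤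
      l[(i : ℕ)]'(by have := i.isLt; omega)) = true)) with hS
  have hmem : ∀ i ∈ S, (i : ℕ) ∈ C ∨ (i : ℕ) + 1 ∈ C := by
    intro i hi
    by_contra hc
    push_neg at hc
    simp only [hS, Finset.mem_filter, decide_eq_true_eq] at hi
    have hlt := h i (i + 1) (by have := i.isLt; omega) (by have := i.isLt; omega)
      (by omega) (by simpa using hc.1) (by simpa using hc.2)
    exact absurd hi.2 (not_le.mpr hlt)
  have hcard : S.card = (S.image (fun i : Fin (n - 1) => (i : ℕ))).card :=
    (Finset.card_image_of_injective S Fin.val_injective).symm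
  have hsub : S.image (fun i : Fin (n - 1) => (i : ℕ)) ⊆ C ∪ C.image (fun x : ℕ => x - 1) := by
    intro x hx
    obtain ⟨i, hi, rfl⟩ := Finset.mem_image.mp hx
    rcases hmem i hi with hc | hc
    · exact Finset.mem_union_left _ hc
    · exact Finset.mem_union_right _ (Finset.mem_image.mpr ⟨(i : ℕ) + 1, hc, by omega⟩)
  calc S.card = (S.image (fun i : Fin (n - 1) => (i : ℕ))).card := hcard
    _ ≤ (C ∪ C.image (fun x : ℕ => x - 1)).card := Finset.card_le_card hsub
    _ ≤ C.card + (C.image (fun x : ℕ => x - 1)).card := by apply Finset.card_union_le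
    _ ≤ C.card + C.card := Nat.add_le_add_left Finset.card_image_le _
    _ = 2 * C.card := by ring
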